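/- (Lemma 3.7, existence of the pest free state in both patches for the dispersal model.) Let α ∈ (0,1), k, ε1, ε2, δ1, δ2, k2, k4 > 0, set Q = (δ1δ2 + δ1k4 + k2δ2)/(δ2 + k4), and assume ε1 − αQ > 0 and ξ = Q/(ε1 − αQ). Then ε1ξ/(1+αξ) = Q, and consequently for every y1* > 0 the point (0, y1*, 0, k4 y1*/(δ2 + k4)) is an equilibrium of the dispersal AF patch model, i.e., all four right-hand sides vanish there. -/

import Mathlib

/-- Lemma 3.7: existence of the pest free state in both patches for the
dispersal AF patch model, under the strict equality `ξ = Q/(ε1 − αQ)`. -/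
theorem dispersal_pest_free_both_patches_exists
    (α ξ k ε1 ε2 δ1 δ2 k2 k4 : ℝ)
    (hα : 0 < α ∧ α < 1)
    (hk : 0 < k)
    (hε1 : 0 < ε1) (hε2 : 0 < ε2)
    (hδ1 : 0 < δ1) (hδ2 : 0 < δ2)
    (hk2 : 0 < k2) (hk4 : 0 < k4)
    (Q : ℝ) (hQ : Q = (δ1 * δ2 + δ1 * k4 + k2 * δ2) / (δ2 + k4))
    (hden : ε1 - α * Q > 0)
    (hξ : ξ = Q / (ε1 - α * Q)) :
    ε1 * ξ / (1 + α * ξ) = Q ∧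
    ∀ y1s : ℝ, 0 < y1s →
      (0 : ℝ) * (1 - 0 / k) - 0 * y1s / (1 + 0 + α * ξ) = 0 ∧
      ε1 * (((0 : ℝ) + ξ) / (1 + 0 + α * ξ)) * y1s - δ1 * y1s
        + k2 * (k4 * y1s / (δ2 + k4) - y1s) = 0 ∧
      (0 : ℝ) * (1 - 0 / k) - 0 * (k4 * y1s / (δ2 + k4)) / (1 + 0) = 0 ∧
      ε2 * ((0 : ℝ) / (1 + 0)) * (k4 * y1s / (δ2 + k4))
        - δ2 * (k4 * y1s / (δ2 + k4))
        + k4 * (y1s - k4 * y1s / (δ2 + k4)) = 0 := by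
  have hd : (ε1 - α * Q) ≠ 0 := ne_of_gt hden
  have hsum : (δ2 + k4) ≠ 0 := by positivity
  have h1 : 1 + α * ξ = ε1 / (ε1 - α * Q) := by
    rw [hξ]; field_simp; ring
  have hmain : ε1 * ξ / (1 + α * ξ) = Q := by
    rw [h1, hξ]
    field_simp
    exact mul_div_cancel_right₀ Q (by rwa [mul_comm Q α])
  refine ⟨hmain, fun y1s hy => ?_⟩
  refine ⟨by ring, ?_, by ring, ?_⟩
  · have : ε1 * (((0 : ℝ) + ξ) / (1 + 0 + α * ξ)) * y1s = Q * y1s := by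
      rw [show ((0:ℝ) + ξ) = ξ by ring, show (1 + 0 + α * ξ : ℝ) = 1 + α * ξ by ring,
        show ε1 * (ξ / (1 + α * ξ)) * y1s = (ε1 * ξ / (1 + α * ξ)) * y1s by ring, hmain]
    rw [this, hQ]
    field_simp
    ring
  · field_simp
    ring
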